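/- For every n ≥ 4 there exists a graph G of order n with μₙ(G) + μₙ(Ḡ) < −(√2/2)·n + 3, i.e., |μₙ(G)| + |μₙ(Ḡ)| > (√2/2)·n − 3, where μₙ denotes the smallest adjacency eigenvalue. -/

import Mathlib

open Matrix SimpleGraph

section Aux

lemma rayleigh_exists {n : ℕ} (M : Matrix (Fin n) (Fin n) ℝ) (hM : M.IsHermitian)
    (x : Fin n → ℝ) (hx : x ≠ 0) :
    ∃ i, hM.eigenvalues i * (x ⬝ᵥ x) ≤ x ⬝ᵥ (M *ᵥ x) := by
  by_contra hcon
  push_neg at hcon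
  set U : Matrix (Fin n) (Fin n) ℝ := (hM.eigenvectorUnitary : Matrix (Fin n) (Fin n) ℝ) with hU
  have hUU : U * star U = 1 := mem_unitaryGroup_iff.mp hM.eigenvectorUnitary.2
  have hUU' : star U * U = 1 := mem_unitaryGroup_iff'.mp hM.eigenvectorUnitary.2
  set y : Fin n → ℝ := star U *ᵥ x with hy
  have hxy : U *ᵥ y = x := by
    rw [hy, mulVec_mulVec, hUU, one_mulVec]
  have hy0 : y ≠ 0 := by
    intro h
    apply hx
    rw [← hxy, h, mulVec_zero]
  have hvm : ∀ w : Fin n → ℝ, x ⬝ᵥ (U *ᵥ w) = y ⬝ᵥ w := by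
    intro w
    rw [dotProduct_mulVec, hy]
    congr 1
    rw [Matrix.star_eq_conjTranspose, conjTranspose_eq_transpose_of_trivial, mulVec_transpose]
  have hnorm : x ⬝ᵥ x = y ⬝ᵥ y := by
    have h := hvm y
    rw [hxy] at h
    exact h
  have hquad : x ⬝ᵥ (M *ᵥ x) = ∑ i, hM.eigenvalues i * (y i)^2 := by
    conv_lhs => rw [hM.spectral_theorem, Unitary.conjStarAlgAut_apply]
    rw [← mulVec_mulVec, ← mulVec_mulVec, hvm]
    have : star U *ᵥ x = y := rfl
    rw [this, dotProduct]
    apply Finset.sum_congr rfl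
    intro i _
    rw [mulVec_diagonal]
    simp [RCLike.ofReal]
    ring
  have hsum : x ⬝ᵥ x = ∑ i, (y i)^2 := by
    rw [hnorm, dotProduct]; apply Finset.sum_congr rfl; intro i _; ring
  obtain ⟨i0, hi0⟩ : ∃ i, y i ≠ 0 := by
    by_contra h
    push_neg at h
    exact hy0 (funext h)
  have key : ∀ i, x ⬝ᵥ (M *ᵥ x) * (y i)^2 ≤ hM.eigenvalues i * (x ⬝ᵥ x) * (y i)^2 := by
    intro i
    exact mul_le_mul_of_nonneg_right (hcon i).le (sq_nonneg _)
  have keystrict : x ⬝ᵥ (M *ᵥ x) * (y i0)^2 < hM.eigenvalues i0 * (x ⬝ᵥ x) * (y i0)^2 := by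
    exact mul_lt_mul_of_pos_right (hcon i0) (by positivity)
  have : ∑ i, x ⬝ᵥ (M *ᵥ x) * (y i)^2 < ∑ i, hM.eigenvalues i * (x ⬝ᵥ x) * (y i)^2 := by
    apply Finset.sum_lt_sum (fun i _ => key i) ⟨i0, Finset.mem_univ _, keystrict⟩
  rw [← Finset.mul_sum] at this
  have e2 : ∑ i, hM.eigenvalues i * (x ⬝ᵥ x) * (y i)^2 = (x ⬝ᵥ x) * ∑ i, hM.eigenvalues i * (y i)^2 := by
    rw [Finset.mul_sum]; apply Finset.sum_congr rfl; intro i _; ring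
  rw [e2, ← hquad, ← hsum, mul_comm] at this
  exact lt_irrefl _ this

lemma sort_zero_le {n : ℕ} (hn : 0 < n) (f : Fin n → ℝ) (i : Fin n) :
    f (Tuple.sort f ⟨0, hn⟩) ≤ f i := by
  have h := Tuple.monotone_sort f
  have : i = Tuple.sort f ((Tuple.sort f)⁻¹ i) := by simp
  rw [this]
  exact h (by simp [Fin.le_def])

def cls (m k : ℕ) : ℕ :=
  if k < m then 0 else if k < 2*m then 1 else if k < 3*m then 2 else if k < 4*m then 3 else 4

lemma sumClass {n m : ℕ} (h1 : 1 ≤ m) (h4 : 4*m ≤ n) (g : ℕ → ℝ) :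
    ∑ i : Fin n, g (cls m i.1)
      = m*(g 0 + g 1 + g 2 + g 3) + ((n:ℝ) - 4*m) * g 4 := by
  rw [Fin.sum_univ_eq_sum_range (fun k => g (cls m k)) n, Finset.range_eq_Ico]
  rw [← Finset.sum_Ico_consecutive (fun k => g (cls m k)) (Nat.zero_le m) (by omega : m ≤ n)]
  rw [← Finset.sum_Ico_consecutive (fun k => g (cls m k)) (by omega : m ≤ 2*m) (by omega : 2*m ≤ n)]
  rw [← Finset.sum_Ico_consecutive (fun k => g (cls m k)) (by omega : 2*m ≤ 3*m) (by omega : 3*m ≤ n)]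
  rw [← Finset.sum_Ico_consecutive (fun k => g (cls m k)) (by omega : 3*m ≤ 4*m) (by omega : 4*m ≤ n)]
  have e0 : ∀ k ∈ Finset.Ico 0 m, g (cls m k) = g 0 := by
    intro k hk; rw [Finset.mem_Ico] at hk; unfold cls; split_ifs <;> first | rfl | omega
  have e1 : ∀ k ∈ Finset.Ico m (2*m), g (cls m k) = g 1 := by
    intro k hk; rw [Finset.mem_Ico] at hk; unfold cls; split_ifs <;> first | rfl | omega
  have e2 : ∀ k ∈ Finset.Ico (2*m) (3*m), g (cls m k) = g 2 := by
    intro k hk; rw [Finset.mem_Ico] at hk; unfold cls; split_ifs <;> first | rfl | omega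
  have e3 : ∀ k ∈ Finset.Ico (3*m) (4*m), g (cls m k) = g 3 := by
    intro k hk; rw [Finset.mem_Ico] at hk; unfold cls; split_ifs <;> first | rfl | omega
  have e4 : ∀ k ∈ Finset.Ico (4*m) n, g (cls m k) = g 4 := by
    intro k hk; rw [Finset.mem_Ico] at hk; unfold cls; split_ifs <;> first | rfl | omega
  rw [Finset.sum_congr rfl e0, Finset.sum_congr rfl e1, Finset.sum_congr rfl e2,
    Finset.sum_congr rfl e3, Finset.sum_congr rfl e4]
  simp [Nat.card_Ico]
  have : ((n - 4*m : ℕ) : ℝ) = (n:ℝ) - 4*m := by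
    push_cast [Nat.cast_sub (by omega : 4*m ≤ n)]; ring
  rw [this]
  have c2 : 2*m - m = m := by omega
  have c3 : 3*m - 2*m = m := by omega
  have c4 : 4*m - 3*m = m := by omega
  rw [c2, c3, c4]
  ring

/-- auxiliary value in the quadratic form computation -/
def Tval (P : ℕ → ℕ → Prop) [DecidableRel P] (f : ℕ → ℝ) (mr nr : ℝ) (p : ℕ) : ℝ :=
  f p * ((mr * ((if P p 0 then f 0 else 0) + (if P p 1 then f 1 else 0) +
      (if P p 2 then f 2 else 0) + (if P p 3 then f 3 else 0)) +
      (nr - 4*mr) * (if P p 4 then f 4 else 0)) - (if P p p then f p else 0))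

lemma quadForm {n m : ℕ} (h1 : 1 ≤ m) (h4 : 4*m ≤ n)
    (G : SimpleGraph (Fin n)) [DecidableRel G.Adj]
    (P : ℕ → ℕ → Prop) [DecidableRel P]
    (hA : ∀ u v : Fin n, G.Adj u v ↔ u ≠ v ∧ P (cls m u.1) (cls m v.1))
    (f : ℕ → ℝ) :
    (fun i : Fin n => f (cls m i.1)) ⬝ᵥ (G.adjMatrix ℝ *ᵥ fun i : Fin n => f (cls m i.1)) =
      m * (Tval P f m n 0 + Tval P f m n 1 + Tval P f m n 2 + Tval P f m n 3) +
        ((n:ℝ) - 4*m) * Tval P f m n 4 := by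
  have inner : ∀ i : Fin n, (G.adjMatrix ℝ *ᵥ fun i : Fin n => f (cls m i.1)) i
      = (m * ((if P (cls m i.1) 0 then f 0 else 0) + (if P (cls m i.1) 1 then f 1 else 0) +
          (if P (cls m i.1) 2 then f 2 else 0) + (if P (cls m i.1) 3 then f 3 else 0)) +
          ((n:ℝ) - 4*m) * (if P (cls m i.1) 4 then f 4 else 0))
        - (if P (cls m i.1) (cls m i.1) then f (cls m i.1) else 0) := by
    intro i
    have step : ∀ j : Fin n, (if G.Adj i j then (1:ℝ) else 0) * f (cls m j.1)
        = (if P (cls m i.1) (cls m j.1) then f (cls m j.1) else 0)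
          - (if j = i then (if P (cls m i.1) (cls m i.1) then f (cls m i.1) else 0) else 0) := by
      intro j
      by_cases hji : j = i
      · subst hji
        simp [SimpleGraph.irrefl]
      · have hadj : G.Adj i j ↔ P (cls m i.1) (cls m j.1) := by
          rw [hA]
          simp only [Ne, and_iff_right_iff_imp]
          exact fun _ h => hji h.symm
        by_cases hp : P (cls m i.1) (cls m j.1)
        · rw [if_pos (hadj.mpr hp), if_pos hp, if_neg hji]; ring
        · rw [if_neg (fun h => hp (hadj.mp h)), if_neg hp, if_neg hji]; ring
    show (fun j : Fin n => G.adjMatrix ℝ i j) ⬝ᵥ (fun j : Fin n => f (cls m j.1)) = _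
    rw [dotProduct]
    simp only [SimpleGraph.adjMatrix_apply]
    rw [Finset.sum_congr rfl (fun j _ => step j), Finset.sum_sub_distrib,
      Finset.sum_ite_eq' Finset.univ i _]
    rw [sumClass h1 h4 (fun q => if P (cls m i.1) q then f q else 0)]
    simp
  rw [dotProduct, Finset.sum_congr rfl (fun i (_ : i ∈ Finset.univ) => by
      rw [inner i]; rfl : ∀ i ∈ Finset.univ, _ = (fun p => Tval P f m n p) (cls m i.1))]
  rw [sumClass h1 h4 (fun p => Tval P f m n p)]

def relB : ℕ → ℕ → Bool := fun p q =>
  (p == 0 && q == 0) || (p == 3 && q == 3) || (p == 0 && q == 1) || (p == 1 && q == 0) ||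
  (p == 1 && q == 2) || (p == 2 && q == 1) || (p == 2 && q == 3) || (p == 3 && q == 2)

noncomputable def fvec : ℕ → ℝ := fun p =>
  if p = 0 then 1 else if p = 1 then -(1 + Real.sqrt 2) else if p = 2 then 1 + Real.sqrt 2
  else if p = 3 then -1 else 0

noncomputable def gvec : ℕ → ℝ := fun p =>
  if p = 0 then 1 else if p = 1 then Real.sqrt 2 - 1 else if p = 2 then 1 - Real.sqrt 2
  else if p = 3 then -1 else 0

end Aux

/-- The eigenvalues of the adjacency matrix of `G`, in descending order:
`graphEig G i` is the `(i+1)`-th largest eigenvalue. -/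
noncomputable def graphEig {n : ℕ} (G : SimpleGraph (Fin n)) (i : Fin n) : ℝ :=
  letI := Classical.decRel G.Adj
  letI hH : (G.adjMatrix ℝ).IsHermitian := by rw [Matrix.IsHermitian, conjTranspose_eq_transpose_of_trivial]; exact G.isSymm_adjMatrix
  hH.eigenvalues (Tuple.sort hH.eigenvalues i.rev)

theorem stmt18 (n : ℕ) (hn : 4 ≤ n) :
    ∃ G : SimpleGraph (Fin n),
      graphEig G ⟨n - 1, by omega⟩ + graphEig Gᶜ ⟨n - 1, by omega⟩ <
        -(Real.sqrt 2 / 2) * n + 3 := by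
  set s : ℝ := Real.sqrt 2 with hsdef
  have hs : s^2 = 2 := Real.sq_sqrt (by norm_num)
  have hsnn : 0 ≤ s := Real.sqrt_nonneg 2
  have hslt : s < 2 := by nlinarith
  set m : ℕ := n / 4 with hm
  have h1 : 1 ≤ m := by omega
  have h4 : 4*m ≤ n := by omega
  have h43 : n ≤ 4*m + 3 := by omega
  set G : SimpleGraph (Fin n) :=
    SimpleGraph.fromRel (fun u v => relB (cls m u.1) (cls m v.1) = true) with hG
  refine ⟨G, ?_⟩
  letI instG : DecidableRel G.Adj := Classical.decRel G.Adj
  letI instGc : DecidableRel Gᶜ.Adj := Classical.decRel Gᶜ.Adj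
  have hHG : (G.adjMatrix ℝ).IsHermitian := by
    rw [Matrix.IsHermitian, conjTranspose_eq_transpose_of_trivial]; exact G.isSymm_adjMatrix
  have hHGc : (Gᶜ.adjMatrix ℝ).IsHermitian := by
    rw [Matrix.IsHermitian, conjTranspose_eq_transpose_of_trivial]; exact Gᶜ.isSymm_adjMatrix
  -- the graphEig at the last index is below every eigenvalue
  have hrev : (Fin.rev (⟨n-1, by omega⟩ : Fin n)) = ⟨0, by omega⟩ := by
    ext; simp only [Fin.val_rev, Fin.val_mk]; omega
  have eigG_le : ∀ j : Fin n, graphEig G ⟨n-1, by omega⟩ ≤ hHG.eigenvalues j := by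
    intro j
    show hHG.eigenvalues (Tuple.sort hHG.eigenvalues (Fin.rev ⟨n-1, by omega⟩)) ≤ _
    rw [hrev]
    exact sort_zero_le (by omega) _ j
  have eigGc_le : ∀ j : Fin n, graphEig Gᶜ ⟨n-1, by omega⟩ ≤ hHGc.eigenvalues j := by
    intro j
    show hHGc.eigenvalues (Tuple.sort hHGc.eigenvalues (Fin.rev ⟨n-1, by omega⟩)) ≤ _
    rw [hrev]
    exact sort_zero_le (by omega) _ j
  -- adjacency descriptions
  set P : ℕ → ℕ → Prop := fun p q => relB p q = true ∨ relB q p = true with hP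
  have hAG : ∀ u v : Fin n, G.Adj u v ↔ u ≠ v ∧ P (cls m u.1) (cls m v.1) := by
    intro u v
    rw [hG]
    exact SimpleGraph.fromRel_adj _ u v
  set P' : ℕ → ℕ → Prop := fun p q => ¬(relB p q = true ∨ relB q p = true) with hP'
  have hAGc : ∀ u v : Fin n, Gᶜ.Adj u v ↔ u ≠ v ∧ P' (cls m u.1) (cls m v.1) := by
    intro u v
    rw [SimpleGraph.compl_adj, hAG]
    constructor
    · rintro ⟨h1, h2⟩; exact ⟨h1, fun hp => h2 ⟨h1, hp⟩⟩
    · rintro ⟨h1, h2⟩; exact ⟨h1, fun hp => h2 hp.2⟩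
  -- test vectors
  set x : Fin n → ℝ := fun i => fvec (cls m i.1) with hx
  set y : Fin n → ℝ := fun i => gvec (cls m i.1) with hy
  have hcls0 : cls m 0 = 0 := by unfold cls; rw [if_pos (by omega)]
  have hxnz : x ≠ 0 := by
    intro h
    have := congrFun h ⟨0, by omega⟩
    rw [hx] at this
    simp only [hcls0] at this
    norm_num [fvec] at this
  have hynz : y ≠ 0 := by
    intro h
    have := congrFun h ⟨0, by omega⟩
    rw [hy] at this
    simp only [hcls0] at this
    norm_num [gvec] at this
  -- norms
  have hxx : x ⬝ᵥ x = m * (8 + 4*s) := by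
    rw [dotProduct]
    rw [show ∑ i : Fin n, x i * x i = ∑ i : Fin n, (fun p => fvec p * fvec p) (cls m i.1) from rfl]
    rw [sumClass h1 h4 (fun p => fvec p * fvec p)]
    norm_num [fvec]
    refine Or.inl ?_
    linear_combination (2:ℝ) * hs
  have hyy : y ⬝ᵥ y = m * (8 - 4*s) := by
    rw [dotProduct]
    rw [show ∑ i : Fin n, y i * y i = ∑ i : Fin n, (fun p => gvec p * gvec p) (cls m i.1) from rfl]
    rw [sumClass h1 h4 (fun p => gvec p * gvec p)]
    norm_num [gvec]
    refine Or.inl ?_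
    linear_combination (2:ℝ) * hs
  -- quadratic forms
  have hQG : x ⬝ᵥ (G.adjMatrix ℝ *ᵥ x) = (m:ℝ)^2 * (-8 - 8*s) - 2*m := by
    rw [hx, quadForm h1 h4 G P hAG fvec]
    norm_num [Tval, fvec, hP, relB]
    linear_combination (-2*(m:ℝ)^2) * hs
  have hQGc : y ⬝ᵥ (Gᶜ.adjMatrix ℝ *ᵥ y) = (m:ℝ)^2 * (8 - 8*s) + m * (4*s - 6) := by
    rw [hy, quadForm h1 h4 Gᶜ P' hAGc gvec]
    norm_num [Tval, gvec, hP', relB]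
    linear_combination (2*(m:ℝ)^2 - 2*(m:ℝ)) * hs
  have hmpos : (0:ℝ) < m := by positivity
  -- eigenvalue bounds
  have boundG : graphEig G ⟨n-1, by omega⟩ ≤ -s*m - (2-s)/4 := by
    obtain ⟨i, hi⟩ := rayleigh_exists (G.adjMatrix ℝ) hHG x hxnz
    rw [hxx, hQG] at hi
    have key : hHG.eigenvalues i * (m * (8 + 4*s)) ≤ (-s*m - (2-s)/4) * (m * (8 + 4*s)) := by
      calc hHG.eigenvalues i * (m * (8 + 4*s)) ≤ (m:ℝ)^2 * (-8 - 8*s) - 2*m := hi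
        _ = (-s*m - (2-s)/4) * (m * (8 + 4*s)) := by linear_combination (4*(m:ℝ)^2 - (m:ℝ)) * hs
    have := le_of_mul_le_mul_right key (by nlinarith : (0:ℝ) < m * (8 + 4*s))
    exact le_trans (eigG_le i) this
  have boundGc : graphEig Gᶜ ⟨n-1, by omega⟩ ≤ -s*m - (2-s)/4 := by
    obtain ⟨i, hi⟩ := rayleigh_exists (Gᶜ.adjMatrix ℝ) hHGc y hynz
    rw [hyy, hQGc] at hi
    have key : hHGc.eigenvalues i * (m * (8 - 4*s)) ≤ (-s*m - (2-s)/4) * (m * (8 - 4*s)) := by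
      calc hHGc.eigenvalues i * (m * (8 - 4*s)) ≤ (m:ℝ)^2 * (8 - 8*s) + m * (4*s - 6) := hi
        _ = (-s*m - (2-s)/4) * (m * (8 - 4*s)) := by linear_combination (-4*(m:ℝ)^2 + (m:ℝ)) * hs
    have := le_of_mul_le_mul_right key (by nlinarith : (0:ℝ) < m * (8 - 4*s))
    exact le_trans (eigGc_le i) this
  -- combine
  have hn43 : (n:ℝ) ≤ 4*m + 3 := by exact_mod_cast h43
  have := add_le_add boundG boundGc
  rw [show -(Real.sqrt 2 / 2) * n + 3 = -(s/2) * n + 3 from rfl]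
  nlinarith [mul_nonneg hsnn (by linarith : (0:ℝ) ≤ 4*(m:ℝ) + 3 - n)]
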